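/- Let q_n(x) be the determinant of the n×n matrix with 2x on the diagonal, 1 on the super- and sub-diagonal, 1 in the (1,n) and (n,1) entries, and 0 elsewhere (the circulant-type matrix 2xI + A for the affine Dynkin diagram A_{n-1}^{(1)}). Then q_n(x) = 2 T_n(x) + 2(-1)^{n-1}, where T_n is the n-th Chebyshev polynomial of the first kind. -/

import Mathlib

open Polynomial Matrix

-- entry functions
private def triE (x : ℝ) (a b : ℕ) : ℝ :=
  if a = b then 2 * x else if a + 1 = b ∨ b + 1 = a then 1 else 0

private def tri (x : ℝ) (n : ℕ) : Matrix (Fin n) (Fin n) ℝ :=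
  Matrix.of fun i j => triE x i.val j.val

private lemma succAbove_val {n : ℕ} (p : Fin (n+1)) (j : Fin n) :
    ((p.succAbove j : Fin (n+1)) : ℕ) = if (j:ℕ) < (p:ℕ) then (j:ℕ) else (j:ℕ)+1 := by
  rcases lt_or_ge ((j:ℕ)) ((p:ℕ)) with h | h
  · rw [Fin.succAbove_of_castSucc_lt _ _ (by simpa [Fin.lt_def] using h)]
    simp [h]
  · rw [Fin.succAbove_of_le_castSucc _ _ (by simpa [Fin.le_def] using h)]
    rw [if_neg (by omega)]
    simp

private lemma tri_zero (x : ℝ) : (tri x 0).det = 1 := Matrix.det_fin_zero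

private lemma tri_one (x : ℝ) : (tri x 1).det = 2 * x := by
  rw [Matrix.det_fin_one]; simp [tri, triE]

private lemma triE_shift (x : ℝ) (a b : ℕ) : triE x (a+1) (b+1) = triE x a b := by
  unfold triE; split_ifs <;> first | rfl | (exfalso; omega)

private lemma tri_rec (x : ℝ) (n : ℕ) :
    (tri x (n+2)).det = 2*x*(tri x (n+1)).det - (tri x n).det := by
  rw [Matrix.det_succ_row_zero, Fin.sum_univ_succ, Fin.sum_univ_succ]
  have e00 : tri x (n+2) 0 0 = 2*x := by simp [tri, triE]
  have e01 : tri x (n+2) 0 (Fin.succ 0) = 1 := by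
    simp [tri, triE]
  have ez : ∀ i : Fin n, tri x (n+2) 0 i.succ.succ = 0 := by
    intro i; simp [tri, triE]
  have m00 : (tri x (n+2)).submatrix Fin.succ (Fin.succAbove 0) = tri x (n+1) := by
    ext i j
    simp only [Matrix.submatrix_apply, tri, Matrix.of_apply, Fin.val_succ, succAbove_val,
      Fin.val_zero, Nat.not_lt_zero, if_false]
    exact triE_shift x i j
  have mN : ((tri x (n+2)).submatrix Fin.succ (Fin.succ 0).succAbove).det = (tri x n).det := by
    rw [Matrix.det_succ_column_zero, Fin.sum_univ_succ]
    have f0 : (tri x (n+2)).submatrix Fin.succ (Fin.succ 0).succAbove 0 0 = 1 := by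
      simp [tri, triE, succAbove_val]
    have fz : ∀ i : Fin n, (tri x (n+2)).submatrix Fin.succ (Fin.succ 0).succAbove i.succ 0 = 0 := by
      intro i; simp [tri, triE, succAbove_val]
    have mm : ((tri x (n+2)).submatrix Fin.succ (Fin.succ 0).succAbove).submatrix
        (Fin.succAbove 0) Fin.succ = tri x n := by
      ext i j
      simp only [Matrix.submatrix_apply, tri, Matrix.of_apply, Fin.val_succ, succAbove_val,
        Fin.val_zero, Nat.not_lt_zero, if_false]
      simp only [Nat.add_lt_add_iff_right, Nat.not_lt_zero, if_false]
      rw [show (i:ℕ)+1+1 = ((i:ℕ)+1)+1 from rfl, show (j:ℕ)+1+1 = ((j:ℕ)+1)+1 from rfl,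
        triE_shift, triE_shift]
    rw [f0, mm, Finset.sum_eq_zero (fun i _ => by rw [fz]; ring)]
    simp
  rw [e00, e01, m00, mN, Finset.sum_eq_zero (fun i _ => by rw [ez]; ring)]
  simp
  ring

private lemma tri_det (x : ℝ) : ∀ n : ℕ, (tri x n).det = (Chebyshev.U ℝ n).eval x := by
  intro n
  induction n using Nat.strong_induction_on with
  | _ n ih =>
    match n with
    | 0 => simpa [Chebyshev.U_zero] using tri_zero x
    | 1 => rw [tri_one]; simp [Chebyshev.U_one]
    | (k+2) =>
      rw [tri_rec, ih (k+1) (by omega), ih k (by omega)]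
      have h : Chebyshev.U ℝ ((k:ℤ)+2) = 2 * X * Chebyshev.U ℝ ((k:ℤ)+1) - Chebyshev.U ℝ k :=
        Chebyshev.U_add_two ℝ k
      push_cast
      rw [h]
      simp

private lemma twoT (x : ℝ) (k : ℕ) :
    2 * (Chebyshev.T ℝ ((k:ℤ)+2)).eval x
      = (Chebyshev.U ℝ ((k:ℤ)+2)).eval x - (Chebyshev.U ℝ (k:ℤ)).eval x := by
  have h1 : Chebyshev.T ℝ ((k:ℤ)+2) = Chebyshev.U ℝ ((k:ℤ)+2) - X * Chebyshev.U ℝ ((k:ℤ)+1) := by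
    have := Chebyshev.T_eq_U_sub_X_mul_U ℝ ((k:ℤ)+2)
    rwa [show (k:ℤ)+2-1 = (k:ℤ)+1 by ring] at this
  have h2 : Chebyshev.U ℝ ((k:ℤ)+2) = 2 * X * Chebyshev.U ℝ ((k:ℤ)+1) - Chebyshev.U ℝ k :=
    Chebyshev.U_add_two ℝ k
  have e1 := congrArg (eval x) h1
  have e2 := congrArg (eval x) h2
  simp only [eval_sub, eval_mul, eval_X, eval_ofNat] at e1 e2
  linarith

private def cirE (x : ℝ) (L a b : ℕ) : ℝ :=
  if a = b then 2 * x
  else if a + 1 = b ∨ b + 1 = a ∨ (a = 0 ∧ b = L) ∨ (a = L ∧ b = 0) then 1 else 0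

theorem det_affine_A_matrix (n : ℕ) (hn : 3 ≤ n) (x : ℝ) :
    Matrix.det (Matrix.of fun i j : Fin n =>
      if i = j then 2 * x
      else if i.val + 1 = j.val ∨ j.val + 1 = i.val ∨
        (i.val = 0 ∧ j.val = n - 1) ∨ (i.val = n - 1 ∧ j.val = 0) then (1 : ℝ)
      else 0) =
    2 * (Polynomial.Chebyshev.T ℝ n).eval x + 2 * (-1 : ℝ) ^ (n - 1) := by
  obtain ⟨m, rfl⟩ : ∃ m, n = m + 3 := ⟨n - 3, by omega⟩
  have hM : (Matrix.of fun i j : Fin (m+3) =>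
      if i = j then 2 * x
      else if i.val + 1 = j.val ∨ j.val + 1 = i.val ∨
        (i.val = 0 ∧ j.val = m + 3 - 1) ∨ (i.val = m + 3 - 1 ∧ j.val = 0) then (1 : ℝ)
      else 0) = Matrix.of (fun i j : Fin (m+3) => cirE x (m+2) i.val j.val) := by
    ext i j
    simp only [Matrix.of_apply, cirE, Fin.ext_iff, show m+3-1 = m+2 from rfl]
  rw [hM]
  set M := Matrix.of (fun i j : Fin (m+3) => cirE x (m+2) i.val j.val) with hMdef
  -- Laplace along row 0
  rw [Matrix.det_succ_row_zero, Fin.sum_univ_succ, Fin.sum_univ_succ, Fin.sum_univ_castSucc]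
  have entry : ∀ i j : Fin (m+3), M i j = cirE x (m+2) i.val j.val := fun i j => rfl
  have h00 : M 0 0 = 2 * x := by simp [entry, cirE]
  have h01 : M 0 (Fin.succ 0) = 1 := by simp [entry, cirE]
  have hmid : ∀ j : Fin m, M 0 j.castSucc.succ.succ = 0 := by
    intro j; have hj := j.isLt
    simp only [entry, Fin.val_succ, Fin.coe_castSucc, Fin.val_zero, cirE]
    split_ifs <;> first | rfl | (exfalso; omega) | ((exfalso; simp only [false_and, and_false, or_false, false_or, true_and, and_true, true_or, or_true, not_true, not_false_iff] at *) <;> omega) | (exfalso; tauto)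
  have hlast : M 0 (Fin.last m).succ.succ = 1 := by
    simp only [entry, Fin.val_succ, Fin.val_last, Fin.val_zero, cirE]
    split_ifs <;> first | rfl | (exfalso; omega) | ((exfalso; simp only [false_and, and_false, or_false, false_or, true_and, and_true, true_or, or_true, not_true, not_false_iff] at *) <;> omega) | (exfalso; tauto)
  have hA : M.submatrix Fin.succ (Fin.succAbove 0) = tri x (m+2) := by
    ext i j
    have hi := i.isLt; have hj := j.isLt
    simp only [Matrix.submatrix_apply, entry, tri, Matrix.of_apply, Fin.val_succ,
      succAbove_val, Fin.val_zero, Nat.not_lt_zero, if_false]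
    unfold cirE triE
    split_ifs <;> first | rfl | (exfalso; omega) | ((exfalso; simp only [false_and, and_false, or_false, false_or, true_and, and_true, true_or, or_true, not_true, not_false_iff] at *) <;> omega) | (exfalso; tauto)
  have hB : (M.submatrix Fin.succ (Fin.succ 0).succAbove).det
      = (tri x (m+1)).det + (-1 : ℝ)^(m+1) := by
    rw [Matrix.det_succ_column_zero, Fin.sum_univ_succ, Fin.sum_univ_castSucc]
    have b0 : M.submatrix Fin.succ (Fin.succ 0).succAbove 0 0 = 1 := by
      simp only [Matrix.submatrix_apply, entry, succAbove_val, Fin.val_succ, Fin.coe_castSucc, Fin.val_last, Fin.val_zero, cirE, triE, tri, Matrix.of_apply, Nat.not_lt_zero, if_false, Nat.add_lt_add_iff_right, Nat.lt_add_one, Nat.zero_lt_succ, if_true]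
      split_ifs <;> first | rfl | (exfalso; omega) | ((exfalso; simp only [false_and, and_false, or_false, false_or, true_and, and_true, true_or, or_true, not_true, not_false_iff] at *) <;> omega) | (exfalso; tauto)
    have bmid : ∀ i : Fin m, M.submatrix Fin.succ (Fin.succ 0).succAbove i.castSucc.succ 0 = 0 := by
      intro i; have hi := i.isLt
      simp only [Matrix.submatrix_apply, entry, succAbove_val, Fin.val_succ, Fin.coe_castSucc, Fin.val_last, Fin.val_zero, cirE, triE, tri, Matrix.of_apply, Nat.not_lt_zero, if_false, Nat.add_lt_add_iff_right, Nat.lt_add_one, Nat.zero_lt_succ, if_true]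
      split_ifs <;> first | rfl | (exfalso; omega) | ((exfalso; simp only [false_and, and_false, or_false, false_or, true_and, and_true, true_or, or_true, not_true, not_false_iff] at *) <;> omega) | (exfalso; tauto)
    have blast : M.submatrix Fin.succ (Fin.succ 0).succAbove (Fin.last m).succ 0 = 1 := by
      simp only [Matrix.submatrix_apply, entry, succAbove_val, Fin.val_succ, Fin.coe_castSucc, Fin.val_last, Fin.val_zero, cirE, triE, tri, Matrix.of_apply, Nat.not_lt_zero, if_false, Nat.add_lt_add_iff_right, Nat.lt_add_one, Nat.zero_lt_succ, if_true]
      split_ifs <;> first | rfl | (exfalso; omega) | ((exfalso; simp only [false_and, and_false, or_false, false_or, true_and, and_true, true_or, or_true, not_true, not_false_iff] at *) <;> omega) | (exfalso; tauto)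
    have bm0 : (M.submatrix Fin.succ (Fin.succ 0).succAbove).submatrix
        (Fin.succAbove 0) Fin.succ = tri x (m+1) := by
      ext i j; have hi := i.isLt; have hj := j.isLt
      simp only [Matrix.submatrix_apply, entry, succAbove_val, Fin.val_succ, Fin.coe_castSucc, Fin.val_last, Fin.val_zero, cirE, triE, tri, Matrix.of_apply, Nat.not_lt_zero, if_false, Nat.add_lt_add_iff_right, Nat.lt_add_one, Nat.zero_lt_succ, if_true]
      split_ifs <;> first | rfl | (exfalso; omega) | ((exfalso; simp only [false_and, and_false, or_false, false_or, true_and, and_true, true_or, or_true, not_true, not_false_iff] at *) <;> omega) | (exfalso; tauto)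
    have bml : ((M.submatrix Fin.succ (Fin.succ 0).succAbove).submatrix
        (Fin.last m).succ.succAbove Fin.succ).det = 1 := by
      have ht : ((M.submatrix Fin.succ (Fin.succ 0).succAbove).submatrix
          (Fin.last m).succ.succAbove Fin.succ).BlockTriangular OrderDual.toDual := by
        intro r c h
        rw [OrderDual.toDual_lt_toDual] at h
        have hrc : (r:ℕ) < (c:ℕ) := h
        have hr := r.isLt; have hc := c.isLt
        simp only [Matrix.submatrix_apply, entry, succAbove_val, Fin.val_succ, Fin.coe_castSucc, Fin.val_last, Fin.val_zero, cirE, triE, tri, Matrix.of_apply, Nat.not_lt_zero, if_false, Nat.add_lt_add_iff_right, Nat.lt_add_one, Nat.zero_lt_succ, if_true]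
        split_ifs <;> first | rfl | (exfalso; omega) | ((exfalso; simp only [false_and, and_false, or_false, false_or, true_and, and_true, true_or, or_true, not_true, not_false_iff] at *) <;> omega) | (exfalso; tauto)
      rw [Matrix.det_of_lowerTriangular _ ht]
      apply Finset.prod_eq_one
      intro r _
      have hr := r.isLt
      simp only [Matrix.submatrix_apply, entry, succAbove_val, Fin.val_succ, Fin.coe_castSucc, Fin.val_last, Fin.val_zero, cirE, triE, tri, Matrix.of_apply, Nat.not_lt_zero, if_false, Nat.add_lt_add_iff_right, Nat.lt_add_one, Nat.zero_lt_succ, if_true]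
      split_ifs <;> first | rfl | (exfalso; omega) | ((exfalso; simp only [false_and, and_false, or_false, false_or, true_and, and_true, true_or, or_true, not_true, not_false_iff] at *) <;> omega) | (exfalso; tauto)
    rw [b0, bm0, blast, bml, Finset.sum_eq_zero (fun i _ => by rw [bmid]; ring)]
    simp [Fin.val_last]
  have hC : (M.submatrix Fin.succ ((Fin.last m).succ.succ).succAbove).det
      = 1 + (-1 : ℝ)^(m+1) * (tri x (m+1)).det := by
    rw [Matrix.det_succ_column_zero, Fin.sum_univ_succ, Fin.sum_univ_castSucc]
    have c0 : M.submatrix Fin.succ ((Fin.last m).succ.succ).succAbove 0 0 = 1 := by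
      simp only [Matrix.submatrix_apply, entry, succAbove_val, Fin.val_succ, Fin.coe_castSucc, Fin.val_last, Fin.val_zero, cirE, triE, tri, Matrix.of_apply, Nat.not_lt_zero, if_false, Nat.add_lt_add_iff_right, Nat.lt_add_one, Nat.zero_lt_succ, if_true]
      split_ifs <;> first | rfl | (exfalso; omega) | ((exfalso; simp only [false_and, and_false, or_false, false_or, true_and, and_true, true_or, or_true, not_true, not_false_iff] at *) <;> omega) | (exfalso; tauto)
    have cmid : ∀ i : Fin m, M.submatrix Fin.succ ((Fin.last m).succ.succ).succAbove i.castSucc.succ 0 = 0 := by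
      intro i; have hi := i.isLt
      simp only [Matrix.submatrix_apply, entry, succAbove_val, Fin.val_succ, Fin.coe_castSucc, Fin.val_last, Fin.val_zero, cirE, triE, tri, Matrix.of_apply, Nat.not_lt_zero, if_false, Nat.add_lt_add_iff_right, Nat.lt_add_one, Nat.zero_lt_succ, if_true]
      split_ifs <;> first | rfl | (exfalso; omega) | ((exfalso; simp only [false_and, and_false, or_false, false_or, true_and, and_true, true_or, or_true, not_true, not_false_iff] at *) <;> omega) | (exfalso; tauto)
    have clast : M.submatrix Fin.succ ((Fin.last m).succ.succ).succAbove (Fin.last m).succ 0 = 1 := by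
      simp only [Matrix.submatrix_apply, entry, succAbove_val, Fin.val_succ, Fin.coe_castSucc, Fin.val_last, Fin.val_zero, cirE, triE, tri, Matrix.of_apply, Nat.not_lt_zero, if_false, Nat.add_lt_add_iff_right, Nat.lt_add_one, Nat.zero_lt_succ, if_true]
      split_ifs <;> first | rfl | (exfalso; omega) | ((exfalso; simp only [false_and, and_false, or_false, false_or, true_and, and_true, true_or, or_true, not_true, not_false_iff] at *) <;> omega) | (exfalso; tauto)
    have cm0 : ((M.submatrix Fin.succ ((Fin.last m).succ.succ).succAbove).submatrix
        (Fin.succAbove 0) Fin.succ).det = 1 := by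
      have ht : ((M.submatrix Fin.succ ((Fin.last m).succ.succ).succAbove).submatrix
          (Fin.succAbove 0) Fin.succ).BlockTriangular id := by
        intro r c h
        have hrc : (c:ℕ) < (r:ℕ) := h
        have hr := r.isLt; have hc := c.isLt
        simp only [Matrix.submatrix_apply, entry, succAbove_val, Fin.val_succ, Fin.coe_castSucc, Fin.val_last, Fin.val_zero, cirE, triE, tri, Matrix.of_apply, Nat.not_lt_zero, if_false, Nat.add_lt_add_iff_right, Nat.lt_add_one, Nat.zero_lt_succ, if_true]
        split_ifs <;> first | rfl | (exfalso; omega) | ((exfalso; simp only [false_and, and_false, or_false, false_or, true_and, and_true, true_or, or_true, not_true, not_false_iff] at *) <;> omega) | (exfalso; tauto)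
      rw [Matrix.det_of_upperTriangular ht]
      apply Finset.prod_eq_one
      intro r _
      have hr := r.isLt
      simp only [Matrix.submatrix_apply, entry, succAbove_val, Fin.val_succ, Fin.coe_castSucc, Fin.val_last, Fin.val_zero, cirE, triE, tri, Matrix.of_apply, Nat.not_lt_zero, if_false, Nat.add_lt_add_iff_right, Nat.lt_add_one, Nat.zero_lt_succ, if_true]
      split_ifs <;> first | rfl | (exfalso; omega) | ((exfalso; simp only [false_and, and_false, or_false, false_or, true_and, and_true, true_or, or_true, not_true, not_false_iff] at *) <;> omega) | (exfalso; tauto)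
    have cml : (M.submatrix Fin.succ ((Fin.last m).succ.succ).succAbove).submatrix
        (Fin.last m).succ.succAbove Fin.succ = tri x (m+1) := by
      ext i j; have hi := i.isLt; have hj := j.isLt
      simp only [Matrix.submatrix_apply, entry, succAbove_val, Fin.val_succ, Fin.coe_castSucc, Fin.val_last, Fin.val_zero, cirE, triE, tri, Matrix.of_apply, Nat.not_lt_zero, if_false, Nat.add_lt_add_iff_right, Nat.lt_add_one, Nat.zero_lt_succ, if_true]
      split_ifs <;> first | rfl | (exfalso; omega) | ((exfalso; simp only [false_and, and_false, or_false, false_or, true_and, and_true, true_or, or_true, not_true, not_false_iff] at *) <;> omega) | (exfalso; tauto)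
    rw [c0, cm0, clast, cml, Finset.sum_eq_zero (fun i _ => by rw [cmid]; ring)]
    simp [Fin.val_last]
  rw [h00, h01, hlast, hA, hB, hC, Finset.sum_eq_zero (fun j _ => by rw [hmid]; ring),
    tri_det, tri_det]
  have hT2 := twoT x (m+1)
  have hU3 := congrArg (eval x) (Chebyshev.U_add_two ℝ ((m:ℤ)+1))
  simp only [eval_sub, eval_mul, eval_X, eval_ofNat] at hU3
  rw [show (m:ℤ)+1+2 = (m:ℤ)+3 by ring, show (m:ℤ)+1+1 = (m:ℤ)+2 by ring] at hU3
  rw [show ((m+1:ℕ):ℤ)+2 = (m:ℤ)+3 by push_cast; ring] at hT2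
  push_cast at hT2 ⊢
  simp only [Fin.val_zero, Fin.val_succ, Fin.val_last, Fin.val_zero, pow_zero, zero_add,
    pow_one, one_mul, mul_one, show m+1+1 = m+2 from rfl, show m+3-1 = m+2 from rfl]
  rw [show ((-1:ℝ))^(m+2) = -(-1:ℝ)^(m+1) from by
    rw [show m+2 = (m+1)+1 from rfl, pow_succ]; ring]
  have hs : ((-1:ℝ)^(m+1)) * ((-1:ℝ)^(m+1)) = 1 := by
    rw [← pow_add]; exact Even.neg_one_pow ⟨m+1, by ring⟩
  generalize (-1:ℝ)^(m+1) = s at hs ⊢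
  linear_combination -hT2 - hU3 - (Polynomial.eval x (Polynomial.Chebyshev.U ℝ ((m:ℤ)+1)))*hs
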